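/- There exist a 2 × 2 real symmetric positive-definite matrix K that is not diagonal, a vector f ∈ ℝ², and a unit sign row matrix A of size 1 × 2 such that fᵀ · (I − Aᵀ·A) · K · f < 0. Concretely, with f = (1, 2), K = [[1/5, −1], [−1, 10]], and A = [0, 1], the matrix K is symmetric positive definite and fᵀ (I − Aᵀ A) K f = −9/5 < 0, so along dθ/dτ = −(I − AᵀA) K f_θ one gets df/dτ = 9/5 > 0. -/

import Mathlib

open Matrix

/-- A unit sign row matrix: each row has exactly one nonzero entry, equal to `±1`,
located in a distinct column. -/
def IsUnitSignRow {m n : ℕ} (A : Matrix (Fin m) (Fin n) ℝ) : Prop :=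
  ∃ (σ : Fin m → Fin n) (ε : Fin m → ℝ),
    Function.Injective σ ∧ (∀ i, ε i = 1 ∨ ε i = -1) ∧
    ∀ i j, A i j = if j = σ i then ε i else 0

/-- (Eq. 39) There exist a non-diagonal symmetric positive-definite `2 × 2` matrix `K`,
a vector `f`, and a `1 × 2` unit sign row matrix `A` with `fᵀ (I − Aᵀ A) K f < 0`;
concretely `f = (1, 2)`, `K = [[1/5, −1], [−1, 10]]`, `A = [0, 1]` give the value
`−9/5`, so `df/dτ = 9/5 > 0` along the projected dynamics. -/
theorem nondiagonal_gain_counterexample :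
    ∃ (K : Matrix (Fin 2) (Fin 2) ℝ) (f : Fin 2 → ℝ) (A : Matrix (Fin 1) (Fin 2) ℝ),
      K.IsSymm ∧ K.PosDef ∧ (¬ ∃ e : Fin 2 → ℝ, K = Matrix.diagonal e) ∧
      IsUnitSignRow A ∧
      f ⬝ᵥ (((1 : Matrix (Fin 2) (Fin 2) ℝ) - Aᵀ * A) * K) *ᵥ f < 0 ∧
      K = !![1/5, -1; -1, 10] ∧ f = ![1, 2] ∧ A = !![0, 1] ∧
      f ⬝ᵥ (((1 : Matrix (Fin 2) (Fin 2) ℝ) - Aᵀ * A) * K) *ᵥ f = -(9/5) ∧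
      -(f ⬝ᵥ (((1 : Matrix (Fin 2) (Fin 2) ℝ) - Aᵀ * A) * K) *ᵥ f) = 9/5 := by
  refine ⟨!![1/5, -1; -1, 10], ![1, 2], !![0, 1], ?_, ?_, ?_, ?_, ?_, rfl, rfl, rfl, ?_, ?_⟩
  · ext i j; fin_cases i <;> fin_cases j <;> simp [Matrix.IsSymm, Matrix.transpose]
  · refine Matrix.posDef_iff_dotProduct_mulVec.mpr ⟨?_, ?_⟩
    · ext i j; fin_cases i <;> fin_cases j <;>
        simp [Matrix.conjTranspose, Matrix.transpose]
    · intro x hx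
      have h : x 0 ≠ 0 ∨ x 1 ≠ 0 := by
        by_contra h; push_neg at h
        exact hx (funext fun i => by fin_cases i <;> simp [h.1, h.2])
      have hcalc : (star x) ⬝ᵥ (!![1/5, -1; -1, 10] : Matrix (Fin 2) (Fin 2) ℝ) *ᵥ x
          = (1/5) * x 0 * x 0 - 2 * x 0 * x 1 + 10 * x 1 * x 1 := by
        simp [dotProduct, Matrix.mulVec, Fin.sum_univ_succ]; ring
      rw [hcalc]
      rcases h with h | h <;> nlinarith [sq_nonneg (x 0 - 5 * x 1), sq_nonneg (x 0), sq_nonneg (x 1), mul_self_pos.mpr h]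
  · rintro ⟨e, he⟩
    have := congrFun (congrFun he 0) 1
    simp [Matrix.diagonal] at this
  · exact ⟨fun _ => 1, fun _ => 1, fun a b _ => Subsingleton.elim a b,
      fun i => Or.inl rfl, fun i j => by fin_cases i <;> fin_cases j <;> simp⟩
  · norm_num [dotProduct, Matrix.mulVec, Matrix.mul_apply, Fin.sum_univ_succ,
      Matrix.one_apply, Matrix.transpose]
  · norm_num [dotProduct, Matrix.mulVec, Matrix.mul_apply, Fin.sum_univ_succ,
      Matrix.one_apply, Matrix.transpose]
  · norm_num [dotProduct, Matrix.mulVec, Matrix.mul_apply, Fin.sum_univ_succ,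
      Matrix.one_apply, Matrix.transpose]
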